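/- For Re z > 0, the truncated continued fraction R_n(z) (with R_1 = 1/(2z), R_{k+1} = 1/(2z+R_k)) converges as n → ∞ to sqrt(1+z²) − z = 1/(z + sqrt(1+z²)), sqrt being the principal branch. -/

import Mathlib

open Complex Filter

/-- The truncated continued fraction: R 1 z = 1/(2z), R (k+1) z = 1/(2z + R k z). -/
noncomputable def cfR : ℕ → ℂ → ℂ
  | 0, _ => 0
  | 1, z => 1 / (2 * z)
  | n + 2, z => 1 / (2 * z + cfR (n + 1) z)

/-- for Re z > 0, R_n(z) → √(1+z²) − z = 1/(z + √(1+z²)) as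
n → ∞ (principal branch). -/
theorem cfR_tendsto_sqrt (z : ℂ) (hz : 0 < z.re) :
    Tendsto (fun n => cfR n z) atTop (nhds ((1 + z ^ 2) ^ (1 / 2 : ℂ) - z)) ∧
      (1 + z ^ 2) ^ (1 / 2 : ℂ) - z = 1 / (z + (1 + z ^ 2) ^ (1 / 2 : ℂ)) := by
  set w : ℂ := (1 + z ^ 2) ^ (1 / 2 : ℂ) with hwdef
  have hz0 : z ≠ 0 := by
    intro h; rw [h] at hz; simp at hz
  -- w ^ 2 = 1 + z ^ 2
  have hw2 : w ^ 2 = 1 + z ^ 2 := by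
    rw [hwdef, one_div]
    exact_mod_cast Complex.cpow_nat_inv_pow _ (two_ne_zero)
  -- 1 + z^2 is not a nonpositive real
  have him : (1 + z ^ 2).im = 2 * z.re * z.im := by
    simp [pow_two, Complex.add_im, Complex.mul_im]; ring
  have hre_pos : 0 < w.re := by
    rw [hwdef, show (1 / 2 : ℂ) = (2⁻¹ : ℂ) by norm_num, Complex.cpow_inv_two_re]
    apply Real.sqrt_pos.mpr
    apply div_pos _ (by norm_num)
    have habs : (1 + z ^ 2).re ≤ ‖1 + z ^ 2‖ := Complex.re_le_norm _
    rcases eq_or_ne z.im 0 with hy | hy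
    · have h1 : (1 + z ^ 2).re = 1 + z.re ^ 2 - z.im ^ 2 := by
        simp [pow_two, Complex.add_re, Complex.mul_re]; ring
      have : 0 < (1 + z ^ 2).re := by rw [h1, hy]; nlinarith
      nlinarith [norm_nonneg (1 + z ^ 2)]
    · have h2 : |(1 + z ^ 2).re| < ‖1 + z ^ 2‖ := by
        apply Complex.abs_re_lt_norm.mpr
        rw [him]
        intro h
        rcases mul_eq_zero.mp h with h | h
        · rcases mul_eq_zero.mp h with h | h
          · norm_num at h
          · exact absurd h (ne_of_gt hz)
        · exact hy h
      linarith [(abs_lt.mp h2).1]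
  -- imaginary part relation: w.re * w.im = z.re * z.im
  have hab : w.re * w.im = z.re * z.im := by
    have := congrArg Complex.im hw2
    rw [him] at this
    simp [pow_two, Complex.mul_im] at this
    linarith
  -- set lambda and mu
  set lam : ℂ := z + w with hlamdef
  set mu : ℂ := z - w with hmudef
  have hsum : lam + mu = 2 * z := by rw [hlamdef, hmudef]; ring
  have hlm : lam * mu = -1 := by
    rw [hlamdef, hmudef]; linear_combination (-1 : ℂ) * hw2
  -- |mu| < |lam|
  have hmlt : ‖mu‖ < ‖lam‖ := by
    have hns : Complex.normSq mu < Complex.normSq lam := by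
      rw [hlamdef, hmudef]
      simp only [Complex.normSq_apply, Complex.add_re, Complex.add_im,
        Complex.sub_re, Complex.sub_im]
      nlinarith [mul_pos hz hre_pos, sq_nonneg z.im, sq_nonneg w.im,
        mul_pos (mul_pos hre_pos hre_pos) hz, mul_nonneg (mul_nonneg hz.le hz.le) hz.le]
    have := Real.sqrt_lt_sqrt (Complex.normSq_nonneg _) hns
    simpa [Complex.norm_def] using this
  have hlam0 : lam ≠ 0 := by
    intro h
    rw [h] at hmlt
    simp at hmlt
    exact absurd hmlt (not_lt.mpr (norm_nonneg _))
  -- denominators nonzero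
  have hden : ∀ k : ℕ, lam ^ (k + 1) - mu ^ (k + 1) ≠ 0 := by
    intro k h
    have h' : lam ^ (k + 1) = mu ^ (k + 1) := sub_eq_zero.mp h
    have := congrArg (‖·‖) h'
    simp only [norm_pow] at this
    have hlt : ‖mu‖ ^ (k + 1) < ‖lam‖ ^ (k + 1) :=
      pow_lt_pow_left₀ hmlt (norm_nonneg _) (Nat.succ_ne_zero k)
    rw [this] at hlt
    exact lt_irrefl _ hlt
  -- closed form
  have hform : ∀ n : ℕ, cfR (n + 1) z =
      (lam ^ (n + 1) - mu ^ (n + 1)) / (lam ^ (n + 2) - mu ^ (n + 2)) := by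
    intro n
    induction n with
    | zero =>
      show 1 / (2 * z) = _
      rw [div_eq_div_iff (by simpa using hz0) (hden 1)]
      rw [hlamdef, hmudef]; ring
    | succ m ih =>
      show 1 / (2 * z + cfR (m + 1) z) = _
      rw [ih]
      rw [add_div' _ _ _ (hden (m + 1)), one_div_div]
      congr 1
      have key : 2 * z * (lam ^ (m + 2) - mu ^ (m + 2)) + (lam ^ (m + 1) - mu ^ (m + 1)) =
          lam ^ (m + 3) - mu ^ (m + 3) := by
        have e1 : lam ^ (m + 2) = lam ^ (m + 1) * lam := by ring
        have e2 : mu ^ (m + 2) = mu ^ (m + 1) * mu := by ring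
        have e3 : lam ^ (m + 3) = lam ^ (m + 1) * lam * lam := by ring
        have e4 : mu ^ (m + 3) = mu ^ (m + 1) * mu * mu := by ring
        rw [e1, e2, e3, e4]
        linear_combination (mu ^ (m + 1) - lam ^ (m + 1)) * hlm +
          (-(lam ^ (m + 1) * lam - mu ^ (m + 1) * mu)) * hsum +
          2 * (mu ^ (m + 1) - lam ^ (m + 1)) * hw2
      rw [key]
  -- ratio
  set r : ℂ := mu / lam with hrdef
  have hrn : ‖r‖ < 1 := by
    rw [hrdef, norm_div]
    rw [div_lt_one (by simpa using (norm_nonneg mu).trans_lt hmlt)]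
    exact hmlt
  have hpow : ∀ k : ℕ, lam ^ k - mu ^ k = lam ^ k * (1 - r ^ k) := by
    intro k
    rw [hrdef, div_pow]
    field_simp
  -- rewrite closed form
  have hform2 : ∀ n : ℕ, cfR (n + 1) z =
      (1 - r ^ (n + 1)) / (lam * (1 - r ^ (n + 2))) := by
    intro n
    rw [hform n, hpow (n + 1), hpow (n + 2)]
    rw [show lam ^ (n + 2) = lam ^ (n + 1) * lam by ring]
    rw [mul_assoc, mul_div_mul_left _ _ (pow_ne_zero (n + 1) hlam0)]
  -- limit value
  have hval : w - z = 1 / lam := by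
    rw [eq_div_iff hlam0, hlamdef]
    linear_combination hw2
  have hr0 : Tendsto (fun n : ℕ => r ^ n) atTop (nhds 0) :=
    tendsto_pow_atTop_nhds_zero_of_norm_lt_one hrn
  have hr1 : Tendsto (fun n : ℕ => r ^ (n + 1)) atTop (nhds 0) := by
    exact hr0.comp (tendsto_add_atTop_nat 1)
  have hr2 : Tendsto (fun n : ℕ => r ^ (n + 2)) atTop (nhds 0) := by
    exact hr0.comp (tendsto_add_atTop_nat 2)
  have hT : Tendsto (fun n : ℕ => (1 - r ^ n) / (lam * (1 - r ^ (n + 1))))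
      atTop (nhds (w - z)) := by
    have hc1 : Tendsto (fun _ : ℕ => (1 : ℂ)) atTop (nhds 1) := tendsto_const_nhds
    have hcl : Tendsto (fun _ : ℕ => lam) atTop (nhds lam) := tendsto_const_nhds
    have h1 : Tendsto (fun n : ℕ => (1 : ℂ) - r ^ n) atTop (nhds 1) := by
      simpa using hc1.sub hr0
    have h2 : Tendsto (fun n : ℕ => lam * (1 - r ^ (n + 1))) atTop (nhds lam) := by
      simpa using hcl.mul (hc1.sub hr1)
    have := h1.div h2 hlam0
    rw [hval]
    exact this
  constructor
  · apply hT.congr'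
    filter_upwards [eventually_ge_atTop 1] with n hn
    obtain ⟨m, rfl⟩ := Nat.exists_eq_add_of_le hn
    rw [add_comm 1 m]
    exact (hform2 m).symm
  · rw [hval, hlamdef]
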